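/- For a complex cubic E: y² = x³ + Ax + B with Δ_E = −16(4A³+27B²) ≠ 0 and B ≠ 0, let f_E(x) = 12∫₀ˣ(s³+As+B)ds − A² = 3x⁴ + 6Ax² + 12Bx − A². Then the j-invariant of the cubic z² = p_E(x), where p_E is the monic cubic vanishing at the three critical values of f_E, equals 2²⁰·A³(A³−54B²)³/(B²·Δ_E³). -/
import Mathlib


open Polynomial

theorem stmt10 (A B x₁ x₂ x₃ : ℂ)
    (hΔ : -16 * (4 * A ^ 3 + 27 * B ^ 2) ≠ 0) (hB : B ≠ 0)
    (hfact : (X ^ 3 + C A * X + C B : ℂ[X]) = (X - C x₁) * (X - C x₂) * (X - C x₃))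
    (y₁ y₂ y₃ : ℂ)
    (hy₁ : y₁ = 3 * x₁ ^ 4 + 6 * A * x₁ ^ 2 + 12 * B * x₁ - A ^ 2)
    (hy₂ : y₂ = 3 * x₂ ^ 4 + 6 * A * x₂ ^ 2 + 12 * B * x₂ - A ^ 2)
    (hy₃ : y₃ = 3 * x₃ ^ 4 + 6 * A * x₃ ^ 2 + 12 * B * x₃ - A ^ 2)
    (hdist : y₁ ≠ y₂ ∧ y₁ ≠ y₃ ∧ y₂ ≠ y₃)
    (W : WeierstrassCurve ℂ)
    (hW : W = { a₁ := 0, a₂ := -(y₁ + y₂ + y₃), a₃ := 0,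
                a₄ := y₁ * y₂ + y₁ * y₃ + y₂ * y₃, a₆ := -(y₁ * y₂ * y₃) }) :
    W.c₄ ^ 3 / W.Δ =
      2 ^ 20 * A ^ 3 * (A ^ 3 - 54 * B ^ 2) ^ 3 /
        (B ^ 2 * (-16 * (4 * A ^ 3 + 27 * B ^ 2)) ^ 3) := by
  -- extract symmetric function relations from the factorization
  have hexp : ((X - C x₁) * (X - C x₂) * (X - C x₃) : ℂ[X]) =
      X ^ 3 - C (x₁ + x₂ + x₃) * X ^ 2 + C (x₁*x₂ + x₁*x₃ + x₂*x₃) * X - C (x₁*x₂*x₃) := by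
    simp only [C_add, C_mul]; ring
  rw [hexp] at hfact
  have h2 := congrArg (fun p => Polynomial.coeff p 2) hfact
  have h1 := congrArg (fun p => Polynomial.coeff p 1) hfact
  have h0 := congrArg (fun p => Polynomial.coeff p 0) hfact
  simp [coeff_sub, coeff_add, coeff_C_mul, coeff_X_pow, coeff_C, coeff_X, add_mul] at h2 h1 h0
  have he1 : x₃ = -x₁ - x₂ := by linear_combination h2
  have heA : A = x₁*x₂ + x₁*x₃ + x₂*x₃ := h1
  have heB : B = -(x₁*x₂*x₃) := h0
  -- compute c₄ and Δ
  have hc4 : W.c₄ = 16 * (y₁ + y₂ + y₃) ^ 2 - 48 * (y₁ * y₂ + y₁ * y₃ + y₂ * y₃) := by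
    subst hW
    simp only [WeierstrassCurve.c₄, WeierstrassCurve.b₂, WeierstrassCurve.b₄]
    ring
  have hD : W.Δ = 16 * (y₁ - y₂) ^ 2 * (y₁ - y₃) ^ 2 * (y₂ - y₃) ^ 2 := by
    subst hW
    simp only [WeierstrassCurve.Δ, WeierstrassCurve.b₂, WeierstrassCurve.b₄,
      WeierstrassCurve.b₆, WeierstrassCurve.b₈]
    ring
  have hDne : W.Δ ≠ 0 := by
    rw [hD]
    obtain ⟨h12, h13, h23⟩ := hdist
    exact mul_ne_zero (mul_ne_zero (mul_ne_zero (by norm_num)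
      (pow_ne_zero _ (sub_ne_zero_of_ne h12))) (pow_ne_zero _ (sub_ne_zero_of_ne h13)))
      (pow_ne_zero _ (sub_ne_zero_of_ne h23))
  have hden : B ^ 2 * (-16 * (4 * A ^ 3 + 27 * B ^ 2)) ^ 3 ≠ 0 := by
    exact mul_ne_zero (pow_ne_zero _ hB) (pow_ne_zero _ hΔ)
  rw [div_eq_div_iff hDne hden, hc4, hD]
  subst hy₁ hy₂ hy₃ heA heB he1
  ring
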